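/- Let X be a pure k-dimensional simplicial complex on n vertices with complete (k-1)-skeleton. Then α(X) ≤ ϑ_k(X) ≤ n·(1 - deg_min(X)/λ_max(L↑_{k-1}(X))), where deg_min(X) is the minimal degree of a (k-1)-face and λ_max(L↑_{k-1}(X)) is the largest eigenvalue of the (k-1)-th up-Laplacian of X. -/

import Mathlib

open Finset Matrix

/-- The oriented incidence number `[F:K]` induced by the global linear order on
the vertices: it is `(-1)^j` if `K ⊆ F`, `F ∖ K = {x_j}` and `x_j` is the `j`-th
smallest element of `F`, and `0` otherwise. -/
def inc {V : Type} [DecidableEq V] [LinearOrder V] (F K : Finset V) : ℝ :=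
  if K ⊆ F ∧ F.card = K.card + 1 then
    ∑ x ∈ F \ K, (-1 : ℝ) ^ (K.filter (fun y => y < x)).card
  else 0

/-- An abstract simplicial complex on a vertex type `V`: a family of finite subsets
of `V` closed under taking subsets. -/
structure SC (V : Type) [DecidableEq V] where
  faces : Finset (Finset V)
  down_closed : ∀ ⦃F⦄, F ∈ faces → ∀ ⦃K : Finset V⦄, K ⊆ F → K ∈ faces

variable {V : Type} [Fintype V] [DecidableEq V] [LinearOrder V]

/-- The faces of cardinality `m` (i.e. of dimension `m-1`) of a complex. -/
def SC.dfaces (X : SC V) (m : ℕ) : Finset (Finset V) := X.faces.filter fun F => F.card = m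

/-- The faces of cardinality `m`, as a type (index set of the space `C^{m-1}` of
`(m-1)`-dimensional cochains). -/
abbrev Face (X : SC V) (m : ℕ) := {F : Finset V // F ∈ X.dfaces m}

/-- The matrix of the coboundary map `δ_{m-1}` from `(m-1)`-dimensional cochains
(functions on cardinality-`m` faces) to `m`-dimensional cochains, in the bases of
elementary cochains. -/
def deltaMat (X : SC V) (m : ℕ) : Matrix (Face X (m + 1)) (Face X m) ℝ :=
  fun H F => inc H.1 F.1

/-- The up-Laplacian `L↑_{m-1} = ∂_m δ_{m-1}` acting on `(m-1)`-dimensional cochains,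
where `∂ = δ*` is the adjoint (transpose) of the coboundary map. -/
def Lup (X : SC V) (m : ℕ) : Matrix (Face X m) (Face X m) ℝ :=
  (deltaMat X m)ᵀ * deltaMat X m

/-- The down-Laplacian `L↓_m = δ_{m-1} ∂_m` acting on `m`-dimensional cochains. -/
def Ldown (X : SC V) (m : ℕ) : Matrix (Face X (m + 1)) (Face X (m + 1)) ℝ :=
  deltaMat X m * (deltaMat X m)ᵀ

/-- The space of harmonicSp `i`-cochains `H_i = Z_i ∩ Z^i = ker ∂_i ∩ ker δ_i`. -/
def harmonicSp (X : SC V) (i : ℕ) : Submodule ℝ (Face X (i + 1) → ℝ) :=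
  LinearMap.ker (Matrix.mulVecLin (deltaMat X i)ᵀ) ⊓
    LinearMap.ker (Matrix.mulVecLin (deltaMat X (i + 1)))

/-- The type of all `k`-element subsets of `V`. -/
abbrev KSet (V : Type) [Fintype V] [DecidableEq V] (k : ℕ) := {F : Finset V // F.card = k}

/-- `ε_{F,F'} = [F : F ∩ F'] ⬝ [F' : F ∩ F']`. -/
def eps {V : Type} [DecidableEq V] [LinearOrder V] (F F' : Finset V) : ℝ :=
  inc F (F ∩ F') * inc F' (F ∩ F')

/-- The down-Laplacian `L↓_{k-1}` of the complete complex `K_n^k`, as a matrix indexed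
by all `k`-subsets of the vertex set: diagonal entries `k`, off-diagonal entries
`ε_{F,F'}` (which vanish unless `|F ∩ F'| = k-1`). -/
def Lc (V : Type) [Fintype V] [DecidableEq V] [LinearOrder V] (k : ℕ) :
    Matrix (KSet V k) (KSet V k) ℝ :=
  fun F F' => if F = F' then (k : ℝ) else eps F.1 F'.1

/-- `S` is an independent set of the pure `k`-dimensional complex `X`: it contains
no `k`-dimensional face of `X`. -/
def SC.IsIndep (X : SC V) (k : ℕ) (S : Finset V) : Prop :=
  ∀ H ∈ X.dfaces (k + 1), ¬ H ⊆ S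

/-- The independence number `α(X)` of a pure `k`-dimensional complex. -/
noncomputable def alphaNum (X : SC V) (k : ℕ) : ℕ :=
  sSup {m | ∃ S : Finset V, X.IsIndep k S ∧ S.card = m}

/-- `X` is a pure `k`-dimensional simplicial complex: all faces have dimension at
most `k` and every face is contained in a face of dimension `k`. -/
def SC.Pure (X : SC V) (k : ℕ) : Prop :=
  (∀ F ∈ X.faces, F.card ≤ k + 1) ∧ ∀ F ∈ X.faces, ∃ H ∈ X.dfaces (k + 1), F ⊆ H

/-- Feasibility for the primal semidefinite program defining `ϑ_k(X)`. -/
def thetaFeasible (X : SC V) (k : ℕ) (Y : Matrix (KSet V k) (KSet V k) ℝ) : Prop :=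
  Y.PosSemidef ∧ Matrix.trace Y = 1 ∧
  (∀ F F' : KSet V k, F.1 ∪ F'.1 ∈ X.dfaces (k + 1) → Y F F' = 0) ∧
  (∀ F F' : KSet V k, k + 2 ≤ (F.1 ∪ F'.1).card → Y F F' = 0) ∧
  (∀ F F' G G' : KSet V k, F.1 ∪ F'.1 = G.1 ∪ G'.1 →
    eps F.1 F'.1 * Y F F' = eps G.1 G'.1 * Y G G')

/-- The theta number `ϑ_k(X)` of a pure `k`-dimensional simplicial complex: the optimal
value of the semidefinite program maximizing `⟨L↓_{k-1}, Y⟩` over feasible `Y`. -/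
noncomputable def theta (X : SC V) (k : ℕ) : ℝ :=
  sSup {t | ∃ Y, thetaFeasible X k Y ∧ Matrix.trace (Lc V k * Y) = t}

/-- The complete `k`-dimensional complex on the vertex type `V`: all subsets of
cardinality at most `k+1` are faces. -/
def completeComplex (V : Type) [Fintype V] [DecidableEq V] (k : ℕ) : SC V :=
  ⟨univ.filter fun F => F.card ≤ k + 1, by
    intro F hF K hK
    simp only [mem_filter, mem_univ, true_and] at hF ⊢
    exact le_trans (card_le_card hK) hF⟩

/-- The empty complex (no faces at all), conventionally pure of any dimension. -/
def emptyComplex (V : Type) [DecidableEq V] : SC V :=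
  ⟨∅, by intro F hF; simp at hF⟩

/-- The largest eigenvalue of a matrix. -/
noncomputable def lambdaMax {ι : Type} [Fintype ι] (M : Matrix ι ι ℝ) : ℝ :=
  sSup {μ : ℝ | Module.End.HasEigenvalue (Matrix.mulVecLin M) μ}

/-- The smallest eigenvalue of a matrix. -/
noncomputable def lambdaMin {ι : Type} [Fintype ι] (M : Matrix ι ι ℝ) : ℝ :=
  sInf {μ : ℝ | Module.End.HasEigenvalue (Matrix.mulVecLin M) μ}

/-- The degree of a face `F`: the number of faces of one higher dimension containing it. -/
def SC.deg (X : SC V) (F : Finset V) : ℕ :=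
  ((X.dfaces (F.card + 1)).filter fun H => F ⊆ H).card

/-- The minimal degree of a `(k-1)`-dimensional face (a face of cardinality `k`). -/
noncomputable def degMin (X : SC V) (k : ℕ) : ℕ :=
  sInf {m | ∃ F ∈ X.dfaces k, m = X.deg F}

/-- The up-Laplacian `L↑_{k-1}(X)` extended by zeros to a matrix indexed by all
`k`-subsets of the vertex set. -/
def LupE (X : SC V) (k : ℕ) : Matrix (KSet V k) (KSet V k) ℝ :=
  fun F F' => ∑ H ∈ X.dfaces (k + 1), inc H F.1 * inc H F'.1

/-- The down-Laplacian `L↓_{k-1}(X)` extended by zeros to a matrix indexed by all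
`k`-subsets of the vertex set. -/
def LdownE (X : SC V) (k : ℕ) : Matrix (KSet V k) (KSet V k) ℝ :=
  fun F F' =>
    if F.1 ∈ X.faces ∧ F'.1 ∈ X.faces then ∑ K ∈ X.dfaces (k - 1), inc F.1 K * inc F'.1 K
    else 0

/-- The Lovász theta number of a graph given by an adjacency relation `adj` on a finite
vertex type, in its primal formulation. -/
noncomputable def thetaG {W : Type} [Fintype W] (adj : W → W → Prop) : ℝ :=
  sSup {t | ∃ Z : Matrix W W ℝ, Z.PosSemidef ∧ Matrix.trace Z = 1 ∧
    (∀ v w, adj v w → Z v w = 0) ∧ t = ∑ v, ∑ w, Z v w}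

section IncBasics

set_option linter.unusedSectionVars false
variable {V : Type} [DecidableEq V] [LinearOrder V]

lemma inc_eq_zero_of_not_subset {F K : Finset V} (h : ¬ K ⊆ F) : inc F K = 0 := by
  rw [inc, if_neg]; tauto

lemma inc_eq_zero_of_card {F K : Finset V} (h : F.card ≠ K.card + 1) : inc F K = 0 := by
  rw [inc, if_neg]; tauto

lemma inc_ne_zero {F K : Finset V} (h : inc F K ≠ 0) : K ⊆ F ∧ F.card = K.card + 1 := by
  by_contra hc
  rw [not_and_or] at hc
  rcases hc with hc | hc
  · exact h (inc_eq_zero_of_not_subset hc)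
  · exact h (inc_eq_zero_of_card hc)

lemma inc_insert {K : Finset V} {x : V} (h : x ∉ K) :
    inc (insert x K) K = (-1 : ℝ) ^ (K.filter (fun y => y < x)).card := by
  rw [inc, if_pos ⟨subset_insert _ _, Finset.card_insert_of_notMem h⟩]
  have hs : insert x K \ K = {x} := by
    ext y
    simp only [Finset.mem_sdiff, Finset.mem_insert, Finset.mem_singleton]
    constructor
    · rintro ⟨hy | hy, hy2⟩
      · exact hy
      · exact absurd hy hy2
    · rintro rfl; exact ⟨Or.inl rfl, h⟩
  rw [hs, Finset.sum_singleton]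

lemma exists_insert_of_card_succ {F K : Finset V} (h1 : K ⊆ F) (h2 : F.card = K.card + 1) :
    ∃ x, x ∉ K ∧ F = insert x K := by
  have hc : (F \ K).card = 1 := by
    rw [Finset.card_sdiff_of_subset h1, h2]; omega
  obtain ⟨x, hx⟩ := Finset.card_eq_one.1 hc
  refine ⟨x, ?_, ?_⟩
  · have : x ∈ F \ K := hx ▸ Finset.mem_singleton_self x
    exact (Finset.mem_sdiff.1 this).2
  · have := Finset.union_sdiff_of_subset h1
    rw [hx] at this
    rw [← this, Finset.union_comm, ← Finset.insert_eq]

lemma inc_mul_self {F K : Finset V} (h1 : K ⊆ F) (h2 : F.card = K.card + 1) :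
    inc F K * inc F K = 1 := by
  obtain ⟨x, hx, rfl⟩ := exists_insert_of_card_succ h1 h2
  rw [inc_insert hx, ← pow_add]
  exact Even.neg_one_pow ⟨_, rfl⟩

end IncBasics

section SignLemmas

set_option linter.unusedSectionVars false
variable {V : Type} [DecidableEq V] [LinearOrder V]

lemma filter_lt_insert_card {K : Finset V} {a b : V} (ha : a ∉ K) :
    ((insert a K).filter (fun y => y < b)).card
      = (K.filter (fun y => y < b)).card + (if a < b then 1 else 0) := by
  rw [Finset.filter_insert]
  split
  · rw [Finset.card_insert_of_notMem (fun hc => ha (Finset.mem_filter.1 hc).1)]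
  · rw [add_zero]

lemma sign_core {a b : V} {K : Finset V} (hab : a ≠ b) (ha : a ∉ K) (hb : b ∉ K) :
    inc (insert a (insert b K)) (insert a K) * inc (insert a K) K
      + inc (insert a (insert b K)) (insert b K) * inc (insert b K) K = 0 := by
  have haK : a ∉ insert b K := by simp [hab, ha]
  have hbK : b ∉ insert a K := by simp [Ne.symm hab, hb]
  have h1 : inc (insert a (insert b K)) (insert a K)
      = (-1 : ℝ) ^ ((K.filter (fun y => y < b)).card + (if a < b then 1 else 0)) := by
    rw [Finset.insert_comm, inc_insert hbK, filter_lt_insert_card ha]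
  have h2 : inc (insert a (insert b K)) (insert b K)
      = (-1 : ℝ) ^ ((K.filter (fun y => y < a)).card + (if b < a then 1 else 0)) := by
    rw [inc_insert haK, filter_lt_insert_card hb]
  rw [h1, h2, inc_insert ha, inc_insert hb]
  rcases lt_or_gt_of_ne hab with h | h
  · simp [h, not_lt_of_gt h, pow_add, pow_succ]
    ring
  · simp [h, not_lt_of_gt h, pow_add, pow_succ]
    ring

/-- decomposition of two `k`-sets with union of size `k+1` -/
lemma pair_decomp {F F' : Finset V} {k : ℕ} (hF : F.card = k) (hF' : F'.card = k)
    (hne : F ≠ F') (hu : (F ∪ F').card = k + 1) :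
    ∃ a b, a ≠ b ∧ a ∉ F ∩ F' ∧ b ∉ F ∩ F' ∧ F = insert a (F ∩ F') ∧ F' = insert b (F ∩ F')
      ∧ F ∪ F' = insert a (insert b (F ∩ F')) := by
  have hint : (F ∩ F').card = k - 1 ∧ 1 ≤ k := by
    have := Finset.card_union_add_card_inter F F'
    rw [hF, hF', hu] at this
    omega
  have hsub : F ∩ F' ⊆ F := Finset.inter_subset_left
  have hsub' : F ∩ F' ⊆ F' := Finset.inter_subset_right
  obtain ⟨a, ha, hFa⟩ := exists_insert_of_card_succ hsub (by omega)
  obtain ⟨b, hb, hFb⟩ := exists_insert_of_card_succ hsub' (by omega)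
  have haF' : a ∉ F' := by
    intro hc
    have : a ∈ F ∩ F' := Finset.mem_inter.2 ⟨hFa ▸ Finset.mem_insert_self _ _, hc⟩
    exact ha this
  have hab : a ≠ b := by
    rintro rfl
    exact haF' (hFb ▸ Finset.mem_insert_self _ _)
  refine ⟨a, b, hab, ha, hb, hFa, hFb, ?_⟩
  conv_lhs => rw [hFa, hFb]
  ext y
  simp only [Finset.mem_union, Finset.mem_insert, Finset.mem_inter]
  tauto

lemma up_offdiag {F F' : Finset V} {k : ℕ} (hF : F.card = k) (hF' : F'.card = k)
    (hne : F ≠ F') (hu : (F ∪ F').card = k + 1) :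
    inc (F ∪ F') F * inc (F ∪ F') F' = - eps F F' := by
  obtain ⟨a, b, hab, ha, hb, hFa, hFb, hU⟩ := pair_decomp hF hF' hne hu
  have hsc := sign_core hab ha hb
  rw [← hFa, ← hFb] at hsc
  have hU2 : F ∪ F' = insert a F' := by
    rw [hU]; conv_rhs => rw [hFb]
  rw [← hU2] at hsc
  have hic : (F ∩ F').card + 1 = k := by
    have := Finset.card_union_add_card_inter F F'
    rw [hF, hF', hu] at this
    have h1 : (F ∩ F').card < F.card := Finset.card_lt_card
      (Finset.ssubset_iff_of_subset Finset.inter_subset_left |>.2 ⟨a, hFa ▸ Finset.mem_insert_self _ _, ha⟩)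
    omega
  have hx : inc F (F ∩ F') * inc F (F ∩ F') = 1 :=
    inc_mul_self Finset.inter_subset_left (by omega)
  have hy : inc F' (F ∩ F') * inc F' (F ∩ F') = 1 :=
    inc_mul_self Finset.inter_subset_right (by omega)
  have hyy : inc (F ∪ F') F' * inc (F ∪ F') F' = 1 :=
    inc_mul_self Finset.subset_union_right (by omega)
  rw [eps]
  set w := inc (F ∪ F') F
  set x := inc F (F ∩ F')
  set y := inc (F ∪ F') F'
  set z := inc F' (F ∩ F')
  -- hsc : w * x + y * z = 0, hx : x * x = 1, hy : z * z = 1 ; goal : w * y = -(x * z)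
  linear_combination (x*y)*hsc - (w*y)*hx - (x*z)*hyy
end SignLemmas

section GramLemmas

set_option linter.unusedSectionVars false
variable {V : Type} [Fintype V] [DecidableEq V] [LinearOrder V]

lemma eps_eq_zero_of_card {F F' : Finset V} (h : F.card ≠ (F ∩ F').card + 1) :
    eps F F' = 0 := by
  rw [eps, inc_eq_zero_of_card h, zero_mul]

lemma inter_card_lt {F F' : Finset V} (hne : F ≠ F') (hcard : F.card = F'.card) :
    (F ∩ F').card < F.card := by
  apply Finset.card_lt_card
  rw [Finset.ssubset_iff_subset_ne]
  refine ⟨Finset.inter_subset_left, fun hc => hne ?_⟩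
  have h1 : F ⊆ F' := by rw [← hc]; exact Finset.inter_subset_right
  exact Finset.eq_of_subset_of_card_le h1 (le_of_eq hcard.symm)

lemma union_card_gt {F F' : Finset V} (hne : F ≠ F') (hcard : F.card = F'.card) :
    F.card < (F ∪ F').card := by
  have := Finset.card_union_add_card_inter F F'
  have := inter_card_lt hne hcard
  omega

lemma down_gram {k : ℕ} (hk : 1 ≤ k) {F F' : Finset V} (hF : F.card = k) (hF' : F'.card = k) :
    ∑ K : Finset V, inc F K * inc F' K = if F = F' then (k : ℝ) else eps F F' := by
  by_cases hne : F = F'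
  · subst hne
    rw [if_pos rfl]
    rw [← Finset.sum_subset (Finset.subset_univ (F.powersetCard (k-1)))
      (fun K _ hK => ?_)]
    · rw [Finset.sum_congr rfl (fun K hK => ?_), Finset.sum_const, nsmul_eq_mul, mul_one,
        Finset.card_powersetCard, hF]
      · norm_cast
        have h1 : k - (k-1) = 1 := by omega
        rw [← Nat.choose_symm (by omega : k - 1 ≤ k), h1, Nat.choose_one_right]
      · rw [Finset.mem_powersetCard] at hK
        exact inc_mul_self hK.1 (by omega)
    · by_contra hc
      have h1 : inc F K ≠ 0 := fun h => hc (by rw [h, zero_mul])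
      obtain ⟨h2, h3⟩ := inc_ne_zero h1
      exact hK (Finset.mem_powersetCard.2 ⟨h2, by omega⟩)
  · rw [if_neg hne]
    by_cases hcard : (F ∩ F').card + 1 = k
    · rw [Finset.sum_eq_single (F ∩ F') (fun K _ hK => ?_) (fun h => absurd (Finset.mem_univ _) h)]
      · rfl
      · by_contra hc
        have h1 : inc F K ≠ 0 := fun h => hc (by rw [h, zero_mul])
        have h2 : inc F' K ≠ 0 := fun h => hc (by rw [h, mul_zero])
        obtain ⟨h3, h4⟩ := inc_ne_zero h1
        obtain ⟨h5, _⟩ := inc_ne_zero h2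
        refine hK (Finset.eq_of_subset_of_card_le (Finset.subset_inter h3 h5) (by omega))
    · rw [Finset.sum_eq_zero (fun K _ => ?_), eps_eq_zero_of_card (by omega)]
      by_contra hc
      have h1 : inc F K ≠ 0 := fun h => hc (by rw [h, zero_mul])
      have h2 : inc F' K ≠ 0 := fun h => hc (by rw [h, mul_zero])
      obtain ⟨h3, h4⟩ := inc_ne_zero h1
      obtain ⟨h5, _⟩ := inc_ne_zero h2
      have h6 : K ⊆ F ∩ F' := Finset.subset_inter h3 h5
      have h7 := Finset.card_le_card h6
      have h8 := inter_card_lt hne (hF.trans hF'.symm)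
      omega

lemma up_gram {k : ℕ} {T F F' : Finset V} (hFT : F ⊆ T) (hF'T : F' ⊆ T)
    (hF : F.card = k) (hF' : F'.card = k) :
    ∑ H : Finset V, (if H ⊆ T then inc H F * inc H F' else 0)
      = if F = F' then ((T.card : ℝ) - k) else - eps F F' := by
  by_cases hne : F = F'
  · subst hne
    rw [if_pos rfl]
    rw [← Finset.sum_subset (Finset.subset_univ ((T \ F).image (fun y => insert y F)))
      (fun H _ hH => ?_)]
    · have hinj : Set.InjOn (fun y => insert y F) ↑(T \ F) := by
        intro y hy z hz hyz
        simp only [Finset.coe_sdiff, Set.mem_diff, Finset.mem_coe] at hy hz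
        have hyz' : insert y F = insert z F := hyz
        have : y ∈ insert z F := hyz' ▸ Finset.mem_insert_self y F
        rcases Finset.mem_insert.1 this with h | h
        · exact h
        · exact absurd h hy.2
      have hcardim : ((T \ F).image (fun y => insert y F)).card = (T \ F).card :=
        Finset.card_image_of_injOn hinj
      rw [Finset.sum_congr rfl (fun H hH => ?_), Finset.sum_const, nsmul_eq_mul, mul_one,
        hcardim, Finset.card_sdiff_of_subset hFT, hF]
      · rw [Nat.cast_sub (hF ▸ Finset.card_le_card hFT)]
      · obtain ⟨y, hy, rfl⟩ := Finset.mem_image.1 hH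
        rw [Finset.mem_sdiff] at hy
        rw [if_pos (Finset.insert_subset hy.1 hFT)]
        exact inc_mul_self (Finset.subset_insert _ _) (Finset.card_insert_of_notMem hy.2)
    · by_contra hc
      have hsub : H ⊆ T := by
        by_contra h; rw [if_neg h] at hc; exact hc rfl
      rw [if_pos hsub] at hc
      have h1 : inc H F ≠ 0 := fun h => hc (by rw [h, zero_mul])
      obtain ⟨h2, h3⟩ := inc_ne_zero h1
      obtain ⟨y, hy, rfl⟩ := exists_insert_of_card_succ h2 h3
      refine hH (Finset.mem_image.2 ⟨y, Finset.mem_sdiff.2 ⟨hsub (Finset.mem_insert_self _ _), hy⟩, rfl⟩)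
  · rw [if_neg hne]
    by_cases hu : (F ∪ F').card = k + 1
    · rw [Finset.sum_eq_single (F ∪ F') (fun H _ hH => ?_) (fun h => absurd (Finset.mem_univ _) h)]
      · rw [if_pos (Finset.union_subset hFT hF'T)]
        exact up_offdiag hF hF' hne hu
      · by_contra hc
        have hsub : H ⊆ T := by
          by_contra h; rw [if_neg h] at hc; exact hc rfl
        rw [if_pos hsub] at hc
        have h1 : inc H F ≠ 0 := fun h => hc (by rw [h, zero_mul])
        have h2 : inc H F' ≠ 0 := fun h => hc (by rw [h, mul_zero])
        obtain ⟨h3, h4⟩ := inc_ne_zero h1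
        obtain ⟨h5, _⟩ := inc_ne_zero h2
        refine hH (Finset.eq_of_subset_of_card_le (Finset.union_subset h3 h5) (by omega)).symm
    · have hgt := union_card_gt hne (hF.trans hF'.symm)
      have hcui := Finset.card_union_add_card_inter F F'
      rw [Finset.sum_eq_zero (fun H _ => ?_), eps_eq_zero_of_card (by omega), neg_zero]
      by_contra hc
      have hsub : H ⊆ T := by
        by_contra h; rw [if_neg h] at hc; exact hc rfl
      rw [if_pos hsub] at hc
      have h1 : inc H F ≠ 0 := fun h => hc (by rw [h, zero_mul])
      have h2 : inc H F' ≠ 0 := fun h => hc (by rw [h, mul_zero])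
      obtain ⟨h3, h4⟩ := inc_ne_zero h1
      obtain ⟨h5, _⟩ := inc_ne_zero h2
      have h6 := Finset.card_le_card (Finset.union_subset h3 h5)
      omega

end GramLemmas

section DDZero

set_option linter.unusedSectionVars false
variable {V : Type} [Fintype V] [DecidableEq V] [LinearOrder V]

lemma dd {k : ℕ} (H K : Finset V) (hH : H.card = k + 1) :
    ∑ F ∈ H.powersetCard k, inc H F * inc F K = 0 := by
  by_cases hyp : K ⊆ H ∧ K.card + 1 = k
  · obtain ⟨hKH, hKk⟩ := hyp
    have hsd : (H \ K).card = 2 := by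
      rw [Finset.card_sdiff_of_subset hKH]; omega
    obtain ⟨a, b, hab, hab2⟩ := Finset.card_eq_two.1 hsd
    have haH : a ∈ H \ K := hab2 ▸ Finset.mem_insert_self _ _
    have hbH : b ∈ H \ K := hab2 ▸ Finset.mem_insert_of_mem (Finset.mem_singleton_self _)
    rw [Finset.mem_sdiff] at haH hbH
    have hHeq : H = insert a (insert b K) := by
      have h1 := Finset.union_sdiff_of_subset hKH
      rw [hab2] at h1
      rw [← h1]
      ext y
      simp only [Finset.mem_union, Finset.mem_insert, Finset.mem_singleton]
      tauto
    have hFab : (insert a K) ≠ (insert b K) := by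
      intro hc
      have : a ∈ insert b K := hc ▸ Finset.mem_insert_self _ _
      rcases Finset.mem_insert.1 this with h | h
      · exact hab h
      · exact haH.2 h
    have hsub : ({insert a K, insert b K} : Finset (Finset V)) ⊆ H.powersetCard k := by
      intro F hF
      rcases Finset.mem_insert.1 hF with rfl | hF
      · exact Finset.mem_powersetCard.2 ⟨Finset.insert_subset haH.1 hKH,
          by rw [Finset.card_insert_of_notMem haH.2]; omega⟩
      · rw [Finset.mem_singleton] at hF
        subst hF
        exact Finset.mem_powersetCard.2 ⟨Finset.insert_subset hbH.1 hKH,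
          by rw [Finset.card_insert_of_notMem hbH.2]; omega⟩
    rw [← Finset.sum_subset hsub (fun F hF hFn => ?_)]
    · rw [Finset.sum_pair hFab, hHeq]
      exact sign_core hab haH.2 hbH.2
    · by_contra hc
      have h1 : inc H F ≠ 0 := fun h => hc (by rw [h, zero_mul])
      have h2 : inc F K ≠ 0 := fun h => hc (by rw [h, mul_zero])
      obtain ⟨h3, h4⟩ := inc_ne_zero h2
      obtain ⟨x, hx, rfl⟩ := exists_insert_of_card_succ h3 h4
      have hxH : x ∈ H \ K := Finset.mem_sdiff.2
        ⟨(inc_ne_zero h1).1 (Finset.mem_insert_self _ _), hx⟩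
      rw [hab2] at hxH
      rcases Finset.mem_insert.1 hxH with rfl | hxb
      · exact hFn (Finset.mem_insert_self _ _)
      · rw [Finset.mem_singleton] at hxb
        subst hxb
        exact hFn (Finset.mem_insert_of_mem (Finset.mem_singleton_self _))
  · refine Finset.sum_eq_zero (fun F hF => ?_)
    rw [Finset.mem_powersetCard] at hF
    by_contra hc
    have h2 : inc F K ≠ 0 := fun h => hc (by rw [h, mul_zero])
    obtain ⟨h3, h4⟩ := inc_ne_zero h2
    exact hyp ⟨h3.trans hF.1, by omega⟩

lemma dd_subtype {k : ℕ} {p : Finset V → Prop} [DecidablePred p] {H : Finset V}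
    (hcard : ∀ F, p F → F.card = k) (hp : ∀ F, F ⊆ H → F.card = k → p F)
    (hH : H.card = k + 1) (K : Finset V) :
    ∑ F : {A : Finset V // p A}, inc H F.1 * inc F.1 K = 0 := by
  have h1 : ∑ F ∈ Finset.univ.filter p, inc H F * inc F K
      = ∑ F : {A : Finset V // p A}, inc H F.1 * inc F.1 K :=
    Finset.sum_subtype _ (fun x => by simp) _
  rw [← h1, ← Finset.sum_subset (fun F hF => ?_) (fun F hF hFn => ?_), dd H K hH]
  · rw [Finset.mem_powersetCard] at hF
    exact Finset.mem_filter.2 ⟨Finset.mem_univ _, hp F hF.1 hF.2⟩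
  · by_contra hc
    have h1 : inc H F ≠ 0 := fun h => hc (by rw [h, zero_mul])
    obtain ⟨h3, h4⟩ := inc_ne_zero h1
    exact hFn (Finset.mem_powersetCard.2 ⟨h3, hcard F (Finset.mem_filter.1 hF).2⟩)

end DDZero

section Spectral

set_option linter.unusedSectionVars false
variable {ι : Type} [Fintype ι] [DecidableEq ι]

lemma isHermitian_of_symm {M : Matrix ι ι ℝ} (h : Mᵀ = M) : M.IsHermitian := by
  have h2 : Mᴴ = Mᵀ := by
    ext i j
    simp [Matrix.conjTranspose_apply, Matrix.transpose_apply]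
  rw [Matrix.IsHermitian, h2, h]

lemma dotProduct_self_nonneg' (x : ι → ℝ) : 0 ≤ x ⬝ᵥ x :=
  Finset.sum_nonneg (fun i _ => mul_self_nonneg (x i))

lemma psd_smul_one_sub {M : Matrix ι ι ℝ} (hM : M.IsHermitian) {c : ℝ}
    (hc : ∀ i, hM.eigenvalues i ≤ c) :
    (c • (1 : Matrix ι ι ℝ) - M).PosSemidef := by
  set U : Matrix ι ι ℝ := (hM.eigenvectorUnitary : Matrix ι ι ℝ) with hU
  have hUU : U * star U = 1 := (Matrix.mem_unitaryGroup_iff).mp hM.eigenvectorUnitary.2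
  have h1 : c • (1 : Matrix ι ι ℝ) = U * (c • (1 : Matrix ι ι ℝ)) * star U := by
    rw [Matrix.mul_smul, Matrix.mul_one, Matrix.smul_mul, hUU]
  have hdiag : (c • (1 : Matrix ι ι ℝ)) - Matrix.diagonal (RCLike.ofReal ∘ hM.eigenvalues)
      = Matrix.diagonal (fun i => c - hM.eigenvalues i) := by
    ext i j
    by_cases hij : i = j
    · subst hij
      simp [Matrix.sub_apply, Matrix.smul_apply, Matrix.one_apply_eq, Matrix.diagonal_apply_eq]
    · simp [Matrix.sub_apply, Matrix.smul_apply, Matrix.one_apply_ne hij,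
        Matrix.diagonal_apply_ne _ hij]
  have h2 : c • (1 : Matrix ι ι ℝ) - M
      = U * Matrix.diagonal (fun i => c - hM.eigenvalues i) * star U := by
    conv_lhs => rw [h1, hM.spectral_theorem, Unitary.conjStarAlgAut_apply]
    rw [← hdiag, Matrix.mul_sub, Matrix.sub_mul]
  rw [h2]
  have hd : (Matrix.diagonal (fun i => c - hM.eigenvalues i)).PosSemidef :=
    Matrix.PosSemidef.diagonal (fun i => sub_nonneg.2 (hc i))
  have := hd.mul_mul_conjTranspose_same U
  rwa [← Matrix.star_eq_conjTranspose] at this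

lemma psd_quad_nonneg {P : Matrix ι ι ℝ} (hP : P.PosSemidef) (x : ι → ℝ) :
    0 ≤ x ⬝ᵥ P *ᵥ x := by
  have := hP.dotProduct_mulVec_nonneg x
  simpa using this

lemma quad_le_of_psd {M : Matrix ι ι ℝ} {c : ℝ}
    (h : (c • (1 : Matrix ι ι ℝ) - M).PosSemidef) (x : ι → ℝ) :
    x ⬝ᵥ M *ᵥ x ≤ c * (x ⬝ᵥ x) := by
  have h2 := psd_quad_nonneg h x
  rw [Matrix.sub_mulVec, Matrix.smul_mulVec, Matrix.one_mulVec, dotProduct_sub,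
    dotProduct_smul] at h2
  have : (c • (x ⬝ᵥ x)) = c * (x ⬝ᵥ x) := rfl
  linarith [h2]

lemma hasEigenvalue_iff_exists {M : Matrix ι ι ℝ} {μ : ℝ} :
    Module.End.HasEigenvalue M.mulVecLin μ ↔ ∃ v : ι → ℝ, v ≠ 0 ∧ M *ᵥ v = μ • v := by
  constructor
  · intro h
    obtain ⟨v, hv, hv0⟩ := Submodule.ne_bot_iff _ |>.1 h
    rw [Module.End.mem_eigenspace_iff, Matrix.mulVecLin_apply] at hv
    exact ⟨v, hv0, hv⟩
  · rintro ⟨v, hv0, hv⟩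
    exact Module.End.hasEigenvalue_of_hasEigenvector
      ⟨(Module.End.mem_eigenspace_iff).2 (by rw [Matrix.mulVecLin_apply, hv]), hv0⟩

lemma lambdaMax_isGreatest [Nonempty ι] {M : Matrix ι ι ℝ} (hM : M.IsHermitian) :
    IsGreatest {μ : ℝ | Module.End.HasEigenvalue M.mulVecLin μ} (lambdaMax M) := by
  obtain ⟨i0, -, hmax⟩ := Finset.exists_max_image Finset.univ hM.eigenvalues ⟨_, Finset.mem_univ (Classical.arbitrary ι)⟩
  have hub : ∀ μ ∈ {μ : ℝ | Module.End.HasEigenvalue M.mulVecLin μ}, μ ≤ hM.eigenvalues i0 := by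
    intro μ hμ
    obtain ⟨v, hv0, hv⟩ := hasEigenvalue_iff_exists.1 hμ
    have hq := psd_quad_nonneg (psd_smul_one_sub hM (fun i => hmax i (Finset.mem_univ i))) v
    rw [Matrix.sub_mulVec, Matrix.smul_mulVec, Matrix.one_mulVec, dotProduct_sub,
      dotProduct_smul, hv, dotProduct_smul] at hq
    have hvv : 0 < v ⬝ᵥ v :=
      lt_of_le_of_ne (dotProduct_self_nonneg' v) (fun hc => hv0 (dotProduct_self_eq_zero.1 hc.symm))
    have : (hM.eigenvalues i0) * (v ⬝ᵥ v) - μ * (v ⬝ᵥ v) ≥ 0 := by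
      simpa [smul_eq_mul] using hq
    nlinarith
  have hmem : Module.End.HasEigenvalue M.mulVecLin (hM.eigenvalues i0) := by
    refine hasEigenvalue_iff_exists.2 ⟨⇑(hM.eigenvectorBasis i0), ?_, hM.mulVec_eigenvectorBasis i0⟩
    intro hc
    apply hM.eigenvectorBasis.orthonormal.ne_zero i0
    ext j
    exact congrFun hc j
  have heq : lambdaMax M = hM.eigenvalues i0 :=
    IsGreatest.csSup_eq ⟨hmem, hub⟩
  rw [show lambdaMax M = sSup {μ : ℝ | Module.End.HasEigenvalue M.mulVecLin μ} from rfl] at heq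
  rw [show (lambdaMax M : ℝ) = sSup {μ : ℝ | Module.End.HasEigenvalue M.mulVecLin μ} from rfl, heq]
  exact ⟨hmem, hub⟩

lemma quad_le_lambdaMax [Nonempty ι] {M : Matrix ι ι ℝ} (hM : M.IsHermitian) (x : ι → ℝ) :
    x ⬝ᵥ M *ᵥ x ≤ lambdaMax M * (x ⬝ᵥ x) := by
  obtain ⟨i0, -, hmax⟩ := Finset.exists_max_image Finset.univ hM.eigenvalues ⟨_, Finset.mem_univ (Classical.arbitrary ι)⟩
  have hgr := lambdaMax_isGreatest hM
  have h1 : ∀ i, hM.eigenvalues i ≤ lambdaMax M := by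
    intro i
    calc hM.eigenvalues i ≤ hM.eigenvalues i0 := hmax i (Finset.mem_univ i)
      _ ≤ lambdaMax M := by
        apply hgr.2
        refine hasEigenvalue_iff_exists.2 ⟨⇑(hM.eigenvectorBasis i0), ?_, hM.mulVec_eigenvectorBasis i0⟩
        intro hc
        apply hM.eigenvectorBasis.orthonormal.ne_zero i0
        ext j
        exact congrFun hc j
  exact quad_le_of_psd (psd_smul_one_sub hM h1) x

lemma diag_le_lambdaMax [Nonempty ι] {M : Matrix ι ι ℝ} (hM : M.IsHermitian) (i : ι) :
    M i i ≤ lambdaMax M := by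
  have h := quad_le_lambdaMax hM (Pi.single i 1)
  have h1 : (Pi.single i 1 : ι → ℝ) ⬝ᵥ (Pi.single i 1) = 1 := by
    simp [dotProduct_single]
  have h2 : (Pi.single i 1 : ι → ℝ) ⬝ᵥ (M *ᵥ Pi.single i 1) = M i i := by
    simp [single_dotProduct, Matrix.mulVec_single]
  rw [h1, h2, mul_one] at h
  exact h

lemma lambdaMax_submatrix {ι' : Type} [Fintype ι'] [DecidableEq ι'] (e : ι' ≃ ι)
    (A : Matrix ι ι ℝ) : lambdaMax (A.submatrix e e) = lambdaMax A := by
  have hset : {μ : ℝ | Module.End.HasEigenvalue (A.submatrix e e).mulVecLin μ}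
      = {μ : ℝ | Module.End.HasEigenvalue A.mulVecLin μ} := by
    ext μ
    simp only [Set.mem_setOf_eq]
    rw [hasEigenvalue_iff_exists, hasEigenvalue_iff_exists]
    constructor
    · rintro ⟨v, hv0, hv⟩
      rw [Matrix.submatrix_mulVec_equiv] at hv
      refine ⟨v ∘ e.symm, fun hc => hv0 (funext fun i => ?_), funext fun i => ?_⟩
      · have := congrFun hc (e i); simpa using this
      · have := congrFun hv (e.symm i); simpa using this
    · rintro ⟨v, hv0, hv⟩
      refine ⟨v ∘ e, fun hc => hv0 (funext fun i => ?_), ?_⟩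
      · have := congrFun hc (e.symm i); simpa using this
      · rw [Matrix.submatrix_mulVec_equiv]
        have h3 : (v ∘ e) ∘ e.symm = v := funext fun i => by simp
        rw [h3, hv]
        rfl
  rw [lambdaMax, lambdaMax, hset]

end Spectral

section MatrixIds

set_option linter.unusedSectionVars false
set_option linter.unusedVariables false

variable {V : Type} [Fintype V] [DecidableEq V] [LinearOrder V]

/-- auxiliary: the matrix of `δ_{k-1}` of the complete complex, rows all `k`-sets. -/
def lowMat (V : Type) [Fintype V] [DecidableEq V] [LinearOrder V] (k : ℕ) :
    Matrix (KSet V k) (Finset V) ℝ := fun F K => inc F.1 K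

/-- auxiliary: the matrix of `δ_k` of `X`, extended by zero rows. -/
def upXMat (X : SC V) (k : ℕ) : Matrix (Finset V) (KSet V k) ℝ :=
  fun H F => if H ∈ X.dfaces (k+1) then inc H F.1 else 0

/-- auxiliary: the matrix of `δ_k` of the complete complex, extended by zero rows. -/
def upCMat (V : Type) [Fintype V] [DecidableEq V] [LinearOrder V] (k : ℕ) :
    Matrix (Finset V) (KSet V k) ℝ :=
  fun H F => if H.card = k+1 then inc H F.1 else 0

lemma Lc_eq_low {k : ℕ} (hk : 1 ≤ k) : Lc V k = lowMat V k * (lowMat V k)ᵀ := by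
  ext F F'
  rw [Matrix.mul_apply]
  simp only [lowMat, Matrix.transpose_apply]
  rw [down_gram hk F.2 F'.2, Lc]
  by_cases h : F = F'
  · rw [if_pos h, if_pos (congrArg Subtype.val h)]
  · rw [if_neg h, if_neg (fun hc => h (Subtype.ext hc))]

lemma LupE_eq_up (X : SC V) (k : ℕ) : LupE X k = (upXMat X k)ᵀ * upXMat X k := by
  ext F F'
  rw [Matrix.mul_apply, LupE]
  simp only [upXMat, Matrix.transpose_apply, ite_mul, zero_mul, mul_ite, mul_zero]
  rw [← Finset.sum_subset (Finset.subset_univ (X.dfaces (k+1)))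
    (fun H _ hH => by rw [if_neg hH])]
  exact Finset.sum_congr rfl (fun H hH => by rw [if_pos hH, if_pos hH])

lemma Lc_add_upC {k : ℕ} (hk : 1 ≤ k) (hkn : k ≤ Fintype.card V) :
    Lc V k + (upCMat V k)ᵀ * upCMat V k = (Fintype.card V : ℝ) • (1 : Matrix (KSet V k) (KSet V k) ℝ) := by
  ext F F'
  rw [Matrix.add_apply, Matrix.mul_apply]
  simp only [upCMat, Matrix.transpose_apply, ite_mul, zero_mul, mul_ite, mul_zero]
  have hsum : ∑ H : Finset V, (if H.card = k + 1 then if H.card = k+1 then inc H F.1 * inc H F'.1 else 0 else 0)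
      = ∑ H : Finset V, (if H ⊆ Finset.univ then inc H F.1 * inc H F'.1 else 0) := by
    refine Finset.sum_congr rfl (fun H _ => ?_)
    by_cases hc : H.card = k + 1
    · rw [if_pos hc, if_pos hc, if_pos (Finset.subset_univ H)]
    · rw [if_neg hc, if_pos (Finset.subset_univ H)]
      by_cases hz : inc H F.1 = 0
      · rw [hz, zero_mul]
      · have := (inc_ne_zero hz).2
        rw [F.2] at this
        exact absurd this hc
  rw [hsum, up_gram (Finset.subset_univ F.1) (Finset.subset_univ F'.1) F.2 F'.2]
  rw [Lc, Matrix.smul_apply, Matrix.one_apply]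
  by_cases h : F = F'
  · rw [if_pos h, if_pos (congrArg Subtype.val h), if_pos h, Finset.card_univ, smul_eq_mul, mul_one]
    push_cast
    ring
  · rw [if_neg h, if_neg (fun hc => h (Subtype.ext hc)), if_neg h, smul_eq_mul, mul_zero]
    ring

lemma upC_mul_low {k : ℕ} : upCMat V k * lowMat V k = 0 := by
  ext H K
  rw [Matrix.mul_apply, Matrix.zero_apply]
  simp only [upCMat, lowMat, ite_mul, zero_mul]
  by_cases hc : H.card = k + 1
  · simp only [hc, if_pos rfl, if_true]
    exact dd_subtype (fun F hF => hF) (fun F _ hF => hF) hc K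
  · exact Finset.sum_eq_zero (fun F _ => by rw [if_neg hc])

lemma upX_mul_low (X : SC V) {k : ℕ} : upXMat X k * lowMat V k = 0 := by
  ext H K
  rw [Matrix.mul_apply, Matrix.zero_apply]
  simp only [upXMat, lowMat, ite_mul, zero_mul]
  by_cases hc : H ∈ X.dfaces (k+1)
  · simp only [hc, if_true]
    have hcard : H.card = k + 1 := (Finset.mem_filter.1 hc).2
    exact dd_subtype (fun F hF => hF) (fun F _ hF => hF) hcard K
  · exact Finset.sum_eq_zero (fun F _ => by rw [if_neg hc])

lemma Lc_symm {k : ℕ} (hk : 1 ≤ k) : (Lc V k)ᵀ = Lc V k := by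
  rw [Lc_eq_low hk, Matrix.transpose_mul, Matrix.transpose_transpose]

lemma LupE_symm (X : SC V) (k : ℕ) : (LupE X k)ᵀ = LupE X k := by
  rw [LupE_eq_up, Matrix.transpose_mul, Matrix.transpose_transpose]

lemma Lc_mul_upC {k : ℕ} (hk : 1 ≤ k) : Lc V k * ((upCMat V k)ᵀ * upCMat V k) = 0 := by
  rw [Lc_eq_low hk]
  calc lowMat V k * (lowMat V k)ᵀ * ((upCMat V k)ᵀ * upCMat V k)
      = lowMat V k * ((upCMat V k * lowMat V k)ᵀ * upCMat V k) := by
        rw [Matrix.transpose_mul, Matrix.mul_assoc, Matrix.mul_assoc]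
    _ = 0 := by rw [upC_mul_low, Matrix.transpose_zero, Matrix.zero_mul, Matrix.mul_zero]

lemma Lc_sq {k : ℕ} (hk : 1 ≤ k) (hkn : k ≤ Fintype.card V) :
    Lc V k * Lc V k = (Fintype.card V : ℝ) • Lc V k := by
  have h1 : (upCMat V k)ᵀ * upCMat V k = (Fintype.card V : ℝ) • 1 - Lc V k := by
    rw [← Lc_add_upC hk hkn]; abel
  have h2 := Lc_mul_upC (V := V) hk
  rw [h1, Matrix.mul_sub, Matrix.mul_smul, Matrix.mul_one, sub_eq_zero] at h2
  exact h2.symm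

lemma LupE_mul_Lc (X : SC V) {k : ℕ} (hk : 1 ≤ k) : LupE X k * Lc V k = 0 := by
  rw [LupE_eq_up, Lc_eq_low hk]
  calc (upXMat X k)ᵀ * upXMat X k * (lowMat V k * (lowMat V k)ᵀ)
      = (upXMat X k)ᵀ * ((upXMat X k * lowMat V k) * (lowMat V k)ᵀ) := by
        rw [Matrix.mul_assoc, Matrix.mul_assoc]
    _ = 0 := by rw [upX_mul_low, Matrix.zero_mul, Matrix.mul_zero]

lemma Lc_mul_LupE (X : SC V) {k : ℕ} (hk : 1 ≤ k) : Lc V k * LupE X k = 0 := by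
  have h := congrArg Matrix.transpose (LupE_mul_Lc X hk)
  rwa [Matrix.transpose_mul, Lc_symm hk, LupE_symm, Matrix.transpose_zero] at h

lemma LupE_diag (X : SC V) {k : ℕ} (F : KSet V k) :
    LupE X k F F = (X.deg F.1 : ℝ) := by
  rw [LupE, SC.deg, F.2]
  rw [← Finset.sum_filter_add_sum_filter_not (X.dfaces (k+1)) (fun H => F.1 ⊆ H)]
  have h2 : ∑ H ∈ (X.dfaces (k+1)).filter (fun H => ¬ F.1 ⊆ H), inc H F.1 * inc H F.1 = 0 :=
    Finset.sum_eq_zero (fun H hH => by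
      rw [inc_eq_zero_of_not_subset (Finset.mem_filter.1 hH).2, zero_mul])
  rw [h2, add_zero]
  rw [Finset.sum_congr rfl (fun H hH => ?_), Finset.sum_const, nsmul_eq_mul, mul_one]
  rw [Finset.mem_filter] at hH
  exact inc_mul_self hH.2 (by rw [F.2, (Finset.mem_filter.1 hH.1).2])

end MatrixIds

section TracePSD

set_option linter.unusedSectionVars false
variable {ι : Type} [Fintype ι] [DecidableEq ι]

lemma posSemidef_of_quad {M : Matrix ι ι ℝ} (hsym : Mᵀ = M)
    (h : ∀ x : ι → ℝ, 0 ≤ x ⬝ᵥ M *ᵥ x) : M.PosSemidef :=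
  Matrix.PosSemidef.of_dotProduct_mulVec_nonneg (isHermitian_of_symm hsym) (fun x => by simpa using h x)

lemma psd_diag_nonneg {P : Matrix ι ι ℝ} (hP : P.PosSemidef) (i : ι) : 0 ≤ P i i := by
  have h := psd_quad_nonneg hP (Pi.single i 1)
  have h2 : (Pi.single i 1 : ι → ℝ) ⬝ᵥ (P *ᵥ Pi.single i 1) = P i i := by
    simp [single_dotProduct, Matrix.mulVec_single]
  rwa [h2] at h

lemma trace_psd_nonneg {P : Matrix ι ι ℝ} (hP : P.PosSemidef) : 0 ≤ Matrix.trace P :=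
  Finset.sum_nonneg (fun i _ => psd_diag_nonneg hP i)

set_option maxHeartbeats 1000000 in
lemma trace_mul_psd_nonneg {A B : Matrix ι ι ℝ} (hA : A.PosSemidef) (hB : B.PosSemidef) :
    0 ≤ Matrix.trace (A * B) := by
  open scoped MatrixOrder in
  obtain ⟨C, rfl⟩ := CStarAlgebra.nonneg_iff_eq_star_mul_self.mp hA.nonneg
  rw [Matrix.mul_assoc, Matrix.trace_mul_comm]
  have h2 := hB.mul_mul_conjTranspose_same C
  rw [← Matrix.star_eq_conjTranspose] at h2
  exact trace_psd_nonneg h2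

lemma trace_mul_eq_sum {A B : Matrix ι ι ℝ} :
    Matrix.trace (A * B) = ∑ i : ι, ∑ j : ι, A i j * B j i := by
  rw [Matrix.trace]
  exact Finset.sum_congr rfl (fun i _ => Matrix.mul_apply)

end TracePSD

section KeyBound

set_option linter.unusedSectionVars false
set_option linter.unusedVariables false
variable {V : Type} [Fintype V] [DecidableEq V] [LinearOrder V]

lemma dot_mulVec_symm {ι : Type} [Fintype ι] {M : Matrix ι ι ℝ} (hsym : Mᵀ = M) (v w : ι → ℝ) :
    v ⬝ᵥ (M *ᵥ w) = (M *ᵥ v) ⬝ᵥ w := by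
  rw [Matrix.dotProduct_mulVec]
  congr 1
  conv_lhs => rw [← hsym]
  rw [Matrix.vecMul_transpose]

lemma ksets_nonempty {k : ℕ} (hkn : k ≤ Fintype.card V) : Nonempty (KSet V k) := by
  obtain ⟨F, -, hF⟩ := Finset.exists_subset_card_eq
    (show k ≤ (Finset.univ : Finset V).card by simpa using hkn)
  exact ⟨⟨F, hF⟩⟩

/-- with complete `(k-1)`-skeleton, the faces of cardinality `k` are all the `k`-sets -/
def faceEquiv (X : SC V) (k : ℕ) (hskel : ∀ F : Finset V, F.card ≤ k → F ∈ X.faces) :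
    Face X k ≃ KSet V k where
  toFun G := ⟨G.1, (Finset.mem_filter.1 G.2).2⟩
  invFun F := ⟨F.1, Finset.mem_filter.2 ⟨hskel F.1 (le_of_eq F.2), F.2⟩⟩
  left_inv G := Subtype.ext rfl
  right_inv F := Subtype.ext rfl

lemma Lup_eq_submatrix (X : SC V) (k : ℕ)
    (hskel : ∀ F : Finset V, F.card ≤ k → F ∈ X.faces) :
    Lup X k = (LupE X k).submatrix (faceEquiv X k hskel) (faceEquiv X k hskel) := by
  ext G G'
  rw [Lup, Matrix.mul_apply]
  simp only [Matrix.submatrix_apply, deltaMat, Matrix.transpose_apply, LupE, faceEquiv,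
    Equiv.coe_fn_mk]
  exact (Finset.sum_subtype (X.dfaces (k+1)) (fun x => Iff.rfl)
    (fun H => inc H G.1 * inc H G'.1)).symm

lemma key_bound (X : SC V) (k : ℕ) (hk : 1 ≤ k) (hkn : k ≤ Fintype.card V)
    (hskel : ∀ F : Finset V, F.card ≤ k → F ∈ X.faces)
    (hne : (X.dfaces (k + 1)).Nonempty)
    (Y : Matrix (KSet V k) (KSet V k) ℝ) (hY : thetaFeasible X k Y) :
    Matrix.trace (Lc V k * Y)
      ≤ (Fintype.card V : ℝ) * (1 - (degMin X k : ℝ) / lambdaMax (Lup X k)) := by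
  have hI : Nonempty (KSet V k) := ksets_nonempty hkn
  set n : ℝ := (Fintype.card V : ℝ) with hn
  have hn1 : (1:ℝ) ≤ n := by
    rw [hn]; exact_mod_cast le_trans hk hkn
  have hn0 : n ≠ 0 := by linarith
  have hLupHerm : (LupE X k).IsHermitian := isHermitian_of_symm (LupE_symm X k)
  set lm : ℝ := lambdaMax (LupE X k) with hlm
  have hLupEq : lambdaMax (Lup X k) = lm := by
    rw [Lup_eq_submatrix X k hskel, lambdaMax_submatrix]
  obtain ⟨H0, hH0⟩ := hne
  have hH0card : H0.card = k + 1 := (Finset.mem_filter.1 hH0).2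
  obtain ⟨F1s, hF1sub, hF1card⟩ := Finset.exists_subset_card_eq (show k ≤ H0.card by omega)
  have hdegF1 : 1 ≤ X.deg F1s := by
    rw [SC.deg, hF1card]
    exact Finset.card_pos.2 ⟨H0, Finset.mem_filter.2 ⟨hH0, hF1sub⟩⟩
  have hdiag1 := diag_le_lambdaMax hLupHerm ⟨F1s, hF1card⟩
  rw [LupE_diag] at hdiag1
  have hlm_pos : 0 < lm := lt_of_lt_of_le (by exact_mod_cast hdegF1) hdiag1
  set d : ℝ := (degMin X k : ℝ) with hd
  have hd_le : ∀ F : KSet V k, d ≤ (X.deg F.1 : ℝ) := by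
    intro F
    have hmem : F.1 ∈ X.dfaces k := Finset.mem_filter.2 ⟨hskel F.1 (le_of_eq F.2), F.2⟩
    have h := Nat.sInf_le (show X.deg F.1 ∈ {m | ∃ G ∈ X.dfaces k, m = X.deg G} from ⟨F.1, hmem, rfl⟩)
    rw [hd]
    exact_mod_cast h
  have hd0 : (0:ℝ) ≤ d := by rw [hd]; exact Nat.cast_nonneg _
  set γ : ℝ := n / lm with hγ
  have hγ0 : 0 ≤ γ := div_nonneg (by linarith) hlm_pos.le
  have hγlm : γ * lm = n := div_mul_cancel₀ _ (ne_of_gt hlm_pos)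
  set D : Matrix (KSet V k) (KSet V k) ℝ := Matrix.diagonal (fun F => (X.deg F.1 : ℝ)) with hD
  set T : Matrix (KSet V k) (KSet V k) ℝ := γ • (LupE X k - D) with hT
  -- step 1 : trace (T * Y) = 0
  have htr : Matrix.trace (T * Y) = 0 := by
    rw [trace_mul_eq_sum]
    refine Finset.sum_eq_zero (fun F _ => Finset.sum_eq_zero (fun F' _ => ?_))
    by_cases hFF : F = F'
    · subst hFF
      have : T F F = 0 := by
        rw [hT, Matrix.smul_apply, Matrix.sub_apply, LupE_diag, hD, Matrix.diagonal_apply_eq,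
          sub_self, smul_zero]
      rw [this, zero_mul]
    · by_cases hz : LupE X k F F' = 0
      · have : T F F' = 0 := by
          rw [hT, Matrix.smul_apply, Matrix.sub_apply, hz, hD, Matrix.diagonal_apply_ne _ hFF,
            sub_zero, smul_zero]
        rw [this, zero_mul]
      · have hY0 : Y F' F = 0 := by
          obtain ⟨H, hH, hprod⟩ := Finset.exists_ne_zero_of_sum_ne_zero
            (show (∑ H ∈ X.dfaces (k+1), inc H F.1 * inc H F'.1) ≠ 0 from hz)
          have h1 : inc H F.1 ≠ 0 := fun h => hprod (by rw [h, zero_mul])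
          have h2 : inc H F'.1 ≠ 0 := fun h => hprod (by rw [h, mul_zero])
          have h3 := (inc_ne_zero h1).1
          have h4 := (inc_ne_zero h2).1
          have hHcard : H.card = k + 1 := (Finset.mem_filter.1 hH).2
          have hne1 : F.1 ≠ F'.1 := fun h => hFF (Subtype.ext h)
          have h5 := union_card_gt hne1 (F.2.trans F'.2.symm)
          have h6 := Finset.card_le_card (Finset.union_subset h3 h4)
          have hunion : F.1 ∪ F'.1 = H :=
            Finset.eq_of_subset_of_card_le (Finset.union_subset h3 h4)
              (by rw [F.2] at h5; omega)
          refine hY.2.2.1 F' F ?_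
          rw [Finset.union_comm, hunion]
          exact hH
        rw [hY0, mul_zero]
  -- step 2 : PSD of M2
  set M2 : Matrix (KSet V k) (KSet V k) ℝ := n • 1 - Lc V k - γ • LupE X k with hM2
  have hM2sym : M2ᵀ = M2 := by
    rw [hM2, Matrix.transpose_sub, Matrix.transpose_sub, Matrix.transpose_smul,
      Matrix.transpose_smul, Matrix.transpose_one, Lc_symm hk, LupE_symm]
  have hM2psd : M2.PosSemidef := by
    refine posSemidef_of_quad hM2sym (fun x => ?_)
    set u : KSet V k → ℝ := (1/n) • ((Lc V k) *ᵥ x) with hu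
    set w : KSet V k → ℝ := x - u with hw
    have hx : x = u + w := by rw [hw]; abel
    have hnu : (Lc V k) *ᵥ x = n • u := by
      rw [hu, smul_smul, mul_one_div, div_self hn0, one_smul]
    have hLcw : (Lc V k) *ᵥ w = 0 := by
      rw [hw, Matrix.mulVec_sub, hu, Matrix.mulVec_smul, Matrix.mulVec_mulVec, Lc_sq hk hkn,
        Matrix.smul_mulVec, smul_smul, ← hn, one_div_mul_cancel hn0, one_smul, sub_self]
    have hUpu : (LupE X k) *ᵥ u = 0 := by
      rw [hu, Matrix.mulVec_smul, Matrix.mulVec_mulVec, LupE_mul_Lc X hk, Matrix.zero_mulVec,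
        smul_zero]
    have hwu : w ⬝ᵥ u = 0 := by
      rw [hu, dotProduct_smul, dot_mulVec_symm (Lc_symm hk), hLcw,
        zero_dotProduct, smul_zero]
    have huw : u ⬝ᵥ w = 0 := by rw [dotProduct_comm]; exact hwu
    have hxLc : x ⬝ᵥ ((Lc V k) *ᵥ x) = n * (u ⬝ᵥ u) := by
      rw [hnu, dotProduct_smul]
      conv_lhs => rw [hx]
      rw [add_dotProduct, hwu, add_zero, smul_eq_mul]
    have hxUp : x ⬝ᵥ ((LupE X k) *ᵥ x) = w ⬝ᵥ ((LupE X k) *ᵥ w) := by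
      conv_lhs => rw [hx]
      rw [Matrix.mulVec_add, hUpu, zero_add, add_dotProduct,
        dot_mulVec_symm (LupE_symm X k) u w, hUpu, zero_dotProduct, zero_add]
    have hxx : x ⬝ᵥ x = u ⬝ᵥ u + w ⬝ᵥ w := by
      conv_lhs => rw [hx]
      rw [dotProduct_add, add_dotProduct, add_dotProduct, hwu, huw]
      ring
    have hUpw : w ⬝ᵥ ((LupE X k) *ᵥ w) ≤ lm * (w ⬝ᵥ w) := by
      rw [hlm]
      exact quad_le_lambdaMax hLupHerm w
    have hww0 : 0 ≤ w ⬝ᵥ w := dotProduct_self_nonneg' w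
    have huu0 : 0 ≤ u ⬝ᵥ u := dotProduct_self_nonneg' u
    rw [hM2, Matrix.sub_mulVec, Matrix.sub_mulVec, Matrix.smul_mulVec,
      Matrix.smul_mulVec, Matrix.one_mulVec, dotProduct_sub,
      dotProduct_sub, dotProduct_smul, dotProduct_smul]
    simp only [smul_eq_mul]
    nlinarith [mul_le_mul_of_nonneg_left hUpw hγ0]
  -- step 3 : assemble
  set lamstar : ℝ := n - γ * d with hls
  have hPdef : lamstar • (1 : Matrix (KSet V k) (KSet V k) ℝ) - (Lc V k + T)
      = (γ • (D - d • 1)) + M2 := by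
    rw [hls, hT, hM2]
    ext F F'
    simp only [Matrix.smul_apply, Matrix.sub_apply, Matrix.add_apply, Matrix.one_apply,
      smul_eq_mul]
    ring
  have hPpsd : (lamstar • (1 : Matrix (KSet V k) (KSet V k) ℝ) - (Lc V k + T)).PosSemidef := by
    rw [hPdef]
    refine Matrix.PosSemidef.add ?_ hM2psd
    have hdiagid : γ • (D - d • (1 : Matrix (KSet V k) (KSet V k) ℝ))
        = Matrix.diagonal (fun F => γ * ((X.deg F.1 : ℝ) - d)) := by
      ext F F'
      by_cases hFF : F = F'
      · subst hFF
        simp [hD, Matrix.smul_apply, Matrix.sub_apply, Matrix.diagonal_apply_eq,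
          Matrix.one_apply_eq]
      · simp [hD, Matrix.smul_apply, Matrix.sub_apply, Matrix.diagonal_apply_ne _ hFF,
          Matrix.one_apply_ne hFF]
    rw [hdiagid]
    exact Matrix.PosSemidef.diagonal (fun F => mul_nonneg hγ0 (sub_nonneg.2 (hd_le F)))
  have h1 : Matrix.trace (Lc V k * Y) = Matrix.trace ((Lc V k + T) * Y) := by
    rw [Matrix.add_mul, Matrix.trace_add, htr, add_zero]
  have h2 : 0 ≤ Matrix.trace ((lamstar • (1 : Matrix (KSet V k) (KSet V k) ℝ) - (Lc V k + T)) * Y) :=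
    trace_mul_psd_nonneg hPpsd hY.1
  rw [Matrix.sub_mul, Matrix.trace_sub, Matrix.smul_mul, Matrix.one_mul, Matrix.trace_smul,
    hY.2.1, smul_eq_mul, mul_one] at h2
  have h3 : Matrix.trace (Lc V k * Y) ≤ lamstar := by rw [h1]; linarith
  have h4 : lamstar = n * (1 - d / lm) := by
    rw [hls, hγ]
    field_simp
  rw [hLupEq]
  calc Matrix.trace (Lc V k * Y) ≤ lamstar := h3
    _ = n * (1 - d / lm) := h4

end KeyBound

section Construction

set_option linter.unusedSectionVars false
set_option linter.unusedVariables false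
variable {V : Type} [Fintype V] [DecidableEq V] [LinearOrder V]

lemma conjTranspose_eq_transpose_real {m n : Type} (A : Matrix m n ℝ) : Aᴴ = Aᵀ := by
  ext i j; simp [Matrix.conjTranspose_apply]

abbrev SubKSet (S : Finset V) (k : ℕ) := {A : Finset V // A ⊆ S ∧ A.card = k}

def mlS (S : Finset V) (k : ℕ) : Matrix (SubKSet S k) (Finset V) ℝ := fun F K => inc F.1 K

def elS (S : Finset V) (k : ℕ) : Matrix (Finset V) (SubKSet S k) ℝ :=
  fun H F => if H ⊆ S then inc H F.1 else 0

lemma loS_apply {S : Finset V} {k : ℕ} (F F' : SubKSet S k) :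
    (mlS S k * (mlS S k)ᵀ) F F' = ∑ K : Finset V, inc F.1 K * inc F'.1 K := by
  rw [Matrix.mul_apply]
  rfl

lemma loS_add_upS {k : ℕ} (hk : 1 ≤ k) (S : Finset V) :
    mlS S k * (mlS S k)ᵀ + (elS S k)ᵀ * elS S k
      = (S.card : ℝ) • (1 : Matrix (SubKSet S k) (SubKSet S k) ℝ) := by
  ext F F'
  rw [Matrix.add_apply, loS_apply, Matrix.mul_apply]
  have h2 : ∑ H : Finset V, (elS S k)ᵀ F H * elS S k H F'
      = ∑ H : Finset V, (if H ⊆ S then inc H F.1 * inc H F'.1 else 0) := by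
    refine Finset.sum_congr rfl (fun H _ => ?_)
    simp only [elS, Matrix.transpose_apply]
    by_cases hc : H ⊆ S <;> simp [hc]
  rw [h2, down_gram hk F.2.2 F'.2.2, up_gram F.2.1 F'.2.1 F.2.2 F'.2.2,
    Matrix.smul_apply, Matrix.one_apply]
  by_cases h : F = F'
  · subst h
    rw [if_pos rfl, if_pos rfl, if_pos rfl, smul_eq_mul, mul_one]
    ring
  · have hval : (F : Finset V) ≠ (F' : Finset V) := fun hc => h (Subtype.ext hc)
    rw [if_neg hval, if_neg hval, if_neg h, smul_eq_mul, mul_zero]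
    ring

lemma elS_mul_mlS {k : ℕ} (S : Finset V) : elS S k * mlS S k = 0 := by
  ext H K
  rw [Matrix.mul_apply, Matrix.zero_apply]
  simp only [elS, mlS, ite_mul, zero_mul]
  by_cases hc : H ⊆ S
  · simp only [hc, if_true]
    by_cases hcard : H.card = k + 1
    · exact dd_subtype (fun F hF => hF.2) (fun F hFH hFc => ⟨hFH.trans hc, hFc⟩) hcard K
    · refine Finset.sum_eq_zero (fun F _ => ?_)
      by_contra hz
      have h1 := (inc_ne_zero (fun h => hz (by rw [h, zero_mul]))).2
      rw [F.2.2] at h1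
      exact hcard h1
  · exact Finset.sum_eq_zero (fun F _ => by rw [if_neg hc])

lemma loS_sq {k : ℕ} (hk : 1 ≤ k) (S : Finset V) :
    (mlS S k * (mlS S k)ᵀ) * (mlS S k * (mlS S k)ᵀ)
      = (S.card : ℝ) • (mlS S k * (mlS S k)ᵀ) := by
  have h0 : (mlS S k * (mlS S k)ᵀ) * ((elS S k)ᵀ * elS S k) = 0 := by
    calc mlS S k * (mlS S k)ᵀ * ((elS S k)ᵀ * elS S k)
        = mlS S k * ((elS S k * mlS S k)ᵀ * elS S k) := by
          rw [Matrix.transpose_mul, Matrix.mul_assoc, Matrix.mul_assoc]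
      _ = 0 := by rw [elS_mul_mlS, Matrix.transpose_zero, Matrix.zero_mul, Matrix.mul_zero]
  have h1 : (elS S k)ᵀ * elS S k
      = (S.card : ℝ) • 1 - mlS S k * (mlS S k)ᵀ := by
    rw [← loS_add_upS hk S]; abel
  rw [h1, Matrix.mul_sub, Matrix.mul_smul, Matrix.mul_one, sub_eq_zero] at h0
  exact h0.symm

lemma card_SubKSet (S : Finset V) (k : ℕ) : Fintype.card (SubKSet S k) = S.card.choose k := by
  rw [Fintype.card_subtype]
  rw [show Finset.univ.filter (fun A : Finset V => A ⊆ S ∧ A.card = k) = S.powersetCard k by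
    ext A; simp [Finset.mem_powersetCard]]
  exact Finset.card_powersetCard k S

lemma trace_loS {k : ℕ} (hk : 1 ≤ k) (S : Finset V) :
    Matrix.trace (mlS S k * (mlS S k)ᵀ) = (k : ℝ) * (S.card.choose k : ℝ) := by
  rw [Matrix.trace]
  have h1 : ∀ F : SubKSet S k, (mlS S k * (mlS S k)ᵀ).diag F = (k : ℝ) := by
    intro F
    rw [Matrix.diag_apply, loS_apply, down_gram hk F.2.2 F.2.2, if_pos rfl]
  rw [Finset.sum_congr rfl (fun F _ => h1 F), Finset.sum_const, nsmul_eq_mul,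
    Finset.card_univ, card_SubKSet]
  ring

noncomputable def wS (S : Finset V) (k : ℕ) (c : ℝ) : Matrix (KSet V k) (Finset V) ℝ :=
  fun F K => if F.1 ⊆ S then Real.sqrt c * inc F.1 K else 0

lemma yS_psd (S : Finset V) (k : ℕ) (c : ℝ) : (wS S k c * (wS S k c)ᵀ).PosSemidef := by
  have h := Matrix.posSemidef_self_mul_conjTranspose (wS S k c)
  rwa [conjTranspose_eq_transpose_real] at h

lemma yS_apply {c : ℝ} (hc : 0 ≤ c) (S : Finset V) (k : ℕ) (F F' : KSet V k) :
    (wS S k c * (wS S k c)ᵀ) F F'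
      = if F.1 ⊆ S ∧ F'.1 ⊆ S then c * ∑ K : Finset V, inc F.1 K * inc F'.1 K else 0 := by
  rw [Matrix.mul_apply]
  simp only [wS, Matrix.transpose_apply]
  by_cases h1 : F.1 ⊆ S
  · by_cases h2 : F'.1 ⊆ S
    · rw [if_pos ⟨h1, h2⟩, Finset.mul_sum]
      refine Finset.sum_congr rfl (fun K _ => ?_)
      rw [if_pos h1, if_pos h2]
      rw [show Real.sqrt c * inc F.1 K * (Real.sqrt c * inc F'.1 K)
        = (Real.sqrt c * Real.sqrt c) * (inc F.1 K * inc F'.1 K) by ring,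
        Real.mul_self_sqrt hc]
    · rw [if_neg (fun h => h2 h.2)]
      exact Finset.sum_eq_zero (fun K _ => by rw [if_neg h2, mul_zero])
  · rw [if_neg (fun h => h1 h.1)]
    exact Finset.sum_eq_zero (fun K _ => by rw [if_neg h1, zero_mul])

lemma sum_kset_masked (S : Finset V) (k : ℕ) (f : Finset V → ℝ) :
    ∑ F : KSet V k, (if F.1 ⊆ S then f F.1 else 0) = ∑ F : SubKSet S k, f F.1 := by
  have h1 : ∑ F : KSet V k, (if F.1 ⊆ S then f F.1 else 0)
      = ∑ A ∈ Finset.univ.filter (fun A : Finset V => A.card = k),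
          (if A ⊆ S then f A else 0) :=
    (Finset.sum_subtype (p := fun A : Finset V => A.card = k)
      (Finset.univ.filter (fun A : Finset V => A.card = k)) (fun x => by simp)
      (fun A => if A ⊆ S then f A else 0)).symm
  have h2 : ∑ F : SubKSet S k, f F.1
      = ∑ A ∈ S.powersetCard k, f A :=
    (Finset.sum_subtype (p := fun A : Finset V => A ⊆ S ∧ A.card = k)
      (S.powersetCard k) (fun x => by simp [Finset.mem_powersetCard]) f).symm
  rw [h1, h2, Finset.sum_ite, Finset.sum_const_zero, add_zero]
  apply Finset.sum_congr _ (fun _ _ => rfl)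
  ext A
  simp [Finset.mem_powersetCard, and_comm]

lemma construction (X : SC V) (k : ℕ) (hk : 1 ≤ k) (S : Finset V)
    (hS : X.IsIndep k S) (hks : k ≤ S.card) :
    ∃ Y : Matrix (KSet V k) (KSet V k) ℝ,
      thetaFeasible X k Y ∧ Matrix.trace (Lc V k * Y) = (S.card : ℝ) := by
  set ch : ℝ := ((S.card.choose k : ℕ) : ℝ) with hch
  have hch0 : 0 < ch := by
    rw [hch]; exact_mod_cast Nat.choose_pos hks
  have hk0 : (0:ℝ) < (k:ℝ) := by exact_mod_cast hk
  set c : ℝ := 1 / ((k:ℝ) * ch) with hc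
  have hc0 : 0 ≤ c := by positivity
  have hckch : c * ((k:ℝ) * ch) = 1 := by
    rw [hc]
    field_simp
  set Y := wS S k c * (wS S k c)ᵀ with hY
  have happly := yS_apply hc0 S k
  have hentry : ∀ F F' : KSet V k, Y F F'
      = if F.1 ⊆ S ∧ F'.1 ⊆ S then c * (if F.1 = F'.1 then (k:ℝ) else eps F.1 F'.1) else 0 := by
    intro F F'
    rw [hY, happly F F', down_gram hk F.2 F'.2]
  have hintercard : ∀ F F' : KSet V k, (F.1 ∪ F'.1).card + (F.1 ∩ F'.1).card = k + k := by
    intro F F'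
    have := Finset.card_union_add_card_inter F.1 F'.1
    rw [F.2, F'.2] at this
    exact this
  -- trace Y = 1
  have htrY : Matrix.trace Y = 1 := by
    rw [Matrix.trace]
    have h1 : ∀ F : KSet V k, Y.diag F = (if F.1 ⊆ S then c * (k:ℝ) else 0) := by
      intro F
      rw [Matrix.diag_apply, hentry F F, if_pos rfl]
      by_cases hFS : F.1 ⊆ S
      · rw [if_pos ⟨hFS, hFS⟩, if_pos hFS]
      · rw [if_neg (fun h => hFS h.1), if_neg hFS]
    rw [Finset.sum_congr rfl (fun F _ => h1 F), sum_kset_masked S k (fun _ => c * (k:ℝ)),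
      Finset.sum_const, nsmul_eq_mul, Finset.card_univ, card_SubKSet]
    rw [← hch, ← hckch]
    ring
  -- constraint 3
  have hcond3 : ∀ F F' : KSet V k, F.1 ∪ F'.1 ∈ X.dfaces (k + 1) → Y F F' = 0 := by
    intro F F' hmem
    rw [hentry F F', if_neg (fun hm => hS _ hmem (Finset.union_subset hm.1 hm.2))]
  -- constraint 4
  have hcond4 : ∀ F F' : KSet V k, k + 2 ≤ (F.1 ∪ F'.1).card → Y F F' = 0 := by
    intro F F' hcard
    rw [hentry F F']
    by_cases hm : F.1 ⊆ S ∧ F'.1 ⊆ S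
    · have hne : F.1 ≠ F'.1 := by
        intro h
        rw [h, Finset.union_self, F'.2] at hcard
        omega
      have hint := hintercard F F'
      rw [if_pos hm, if_neg hne, eps_eq_zero_of_card (by rw [F.2]; omega), mul_zero]
    · rw [if_neg hm]
  -- the eps-compatibility function of the union
  have h5 : ∀ F F' : KSet V k, eps F.1 F'.1 * Y F F'
      = (if (F.1 ∪ F'.1).card = k + 1 ∧ F.1 ∪ F'.1 ⊆ S then c else 0) := by
    intro F F'
    rw [hentry F F']
    by_cases hv : F.1 = F'.1
    · have heps0 : eps F.1 F'.1 = 0 := by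
        rw [eps, inc_eq_zero_of_card (by rw [hv, Finset.inter_self, F'.2]; omega), zero_mul]
      rw [heps0, zero_mul, if_neg]
      rintro ⟨hcard, -⟩
      rw [hv, Finset.union_self, F'.2] at hcard
      omega
    · have hint := hintercard F F'
      by_cases hm : F.1 ⊆ S ∧ F'.1 ⊆ S
      · rw [if_pos hm, if_neg hv]
        by_cases hu : (F.1 ∪ F'.1).card = k + 1
        · have he2 : eps F.1 F'.1 * eps F.1 F'.1 = 1 := by
            rw [eps]
            have hx := inc_mul_self (F := F.1) (K := F.1 ∩ F'.1)
              Finset.inter_subset_left (by rw [F.2]; omega)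
            have hy := inc_mul_self (F := F'.1) (K := F.1 ∩ F'.1)
              Finset.inter_subset_right (by rw [F'.2]; omega)
            calc inc F.1 (F.1 ∩ F'.1) * inc F'.1 (F.1 ∩ F'.1)
                  * (inc F.1 (F.1 ∩ F'.1) * inc F'.1 (F.1 ∩ F'.1))
                = (inc F.1 (F.1 ∩ F'.1) * inc F.1 (F.1 ∩ F'.1))
                  * (inc F'.1 (F.1 ∩ F'.1) * inc F'.1 (F.1 ∩ F'.1)) := by ring
              _ = 1 := by rw [hx, hy, mul_one]
          rw [if_pos ⟨hu, Finset.union_subset hm.1 hm.2⟩]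
          calc eps F.1 F'.1 * (c * eps F.1 F'.1)
              = c * (eps F.1 F'.1 * eps F.1 F'.1) := by ring
            _ = c := by rw [he2, mul_one]
        · have hgt := union_card_gt (fun h => hv h) (F.2.trans F'.2.symm)
          rw [F.2] at hgt
          rw [eps_eq_zero_of_card (by rw [F.2]; omega), zero_mul,
            if_neg (fun hcon => hu hcon.1)]
      · rw [if_neg hm, mul_zero, if_neg]
        rintro ⟨-, hsub⟩
        exact hm ⟨(Finset.subset_union_left).trans hsub, (Finset.subset_union_right).trans hsub⟩
  have hcond5 : ∀ F F' G G' : KSet V k, F.1 ∪ F'.1 = G.1 ∪ G'.1 →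
      eps F.1 F'.1 * Y F F' = eps G.1 G'.1 * Y G G' := by
    intro F F' G G' hu
    rw [h5 F F', h5 G G', hu]
  -- value
  have hLcval : ∀ F F' : KSet V k,
      Lc V k F F' = ∑ K : Finset V, inc F.1 K * inc F'.1 K := by
    intro F F'
    rw [Lc_eq_low hk, Matrix.mul_apply]
    rfl
  have hYval : ∀ F F' : KSet V k, Y F' F
      = if F'.1 ⊆ S ∧ F.1 ⊆ S then c * ∑ K : Finset V, inc F'.1 K * inc F.1 K else 0 :=
    fun F F' => by rw [hY]; exact happly F' F
  have htrLcY : Matrix.trace (Lc V k * Y) = (S.card : ℝ) := by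
    rw [trace_mul_eq_sum]
    have hstep1 : ∀ F : KSet V k, ∑ F' : KSet V k, Lc V k F F' * Y F' F
        = (if F.1 ⊆ S then
            (∑ F' : KSet V k, if F'.1 ⊆ S then
              c * ((∑ K : Finset V, inc F.1 K * inc F'.1 K)
                * (∑ K : Finset V, inc F'.1 K * inc F.1 K)) else 0) else 0) := by
      intro F
      by_cases hFS : F.1 ⊆ S
      · rw [if_pos hFS]
        refine Finset.sum_congr rfl (fun F' _ => ?_)
        rw [hLcval F F', hYval F F']
        by_cases hF'S : F'.1 ⊆ S
        · rw [if_pos ⟨hF'S, hFS⟩, if_pos hF'S]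
          ring
        · rw [if_neg (fun h => hF'S h.1), if_neg hF'S, mul_zero]
      · rw [if_neg hFS]
        refine Finset.sum_eq_zero (fun F' _ => ?_)
        rw [hYval F F', if_neg (fun h => hFS h.2), mul_zero]
    rw [Finset.sum_congr rfl (fun F _ => hstep1 F)]
    rw [sum_kset_masked S k (fun A =>
      ∑ F' : KSet V k, if F'.1 ⊆ S then
        c * ((∑ K : Finset V, inc A K * inc F'.1 K)
          * (∑ K : Finset V, inc F'.1 K * inc A K)) else 0)]
    have hstep2 : ∀ F : SubKSet S k,
        (∑ F' : KSet V k, if F'.1 ⊆ S then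
          c * ((∑ K : Finset V, inc F.1 K * inc F'.1 K)
            * (∑ K : Finset V, inc F'.1 K * inc F.1 K)) else 0)
        = ∑ F' : SubKSet S k,
            c * ((∑ K : Finset V, inc F.1 K * inc F'.1 K)
              * (∑ K : Finset V, inc F'.1 K * inc F.1 K)) :=
      fun F => sum_kset_masked S k (fun B =>
        c * ((∑ K : Finset V, inc F.1 K * inc B K) * (∑ K : Finset V, inc B K * inc F.1 K)))
    rw [Finset.sum_congr rfl (fun F _ => hstep2 F)]
    have hrhs : ∑ F : SubKSet S k, ∑ F' : SubKSet S k,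
        c * ((∑ K : Finset V, inc F.1 K * inc F'.1 K)
          * (∑ K : Finset V, inc F'.1 K * inc F.1 K))
        = c * Matrix.trace ((mlS S k * (mlS S k)ᵀ) * (mlS S k * (mlS S k)ᵀ)) := by
      rw [trace_mul_eq_sum, Finset.mul_sum]
      refine Finset.sum_congr rfl (fun F _ => ?_)
      rw [Finset.mul_sum]
      refine Finset.sum_congr rfl (fun F' _ => ?_)
      rw [loS_apply, loS_apply]
    rw [hrhs, loS_sq hk S, Matrix.trace_smul, trace_loS hk S, smul_eq_mul, ← hch]
    calc c * ((S.card : ℝ) * ((k:ℝ) * ch)) = (S.card : ℝ) * (c * ((k:ℝ) * ch)) := by ring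
      _ = (S.card : ℝ) := by rw [hckch, mul_one]
  exact ⟨Y, ⟨yS_psd S k c, htrY, hcond3, hcond4, hcond5⟩, htrLcY⟩

end Construction

/-- For a pure `k`-dimensional complex `X` on `n` vertices with complete
`(k-1)`-skeleton, `α(X) ≤ ϑ_k(X) ≤ n (1 − deg_min(X)/λ_max(L↑_{k-1}(X)))`, the
higher-dimensional analog of Hoffman's ratio bound. -/
theorem theta_le_ratio_bound
    {V : Type} [Fintype V] [DecidableEq V] [LinearOrder V] (X : SC V) (k : ℕ)
    (hk : 1 ≤ k) (hkn : k ≤ Fintype.card V) (hpure : X.Pure k)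
    (hskel : ∀ F : Finset V, F.card ≤ k → F ∈ X.faces)
    (hne : (X.dfaces (k + 1)).Nonempty) :
    (alphaNum X k : ℝ) ≤ theta X k ∧
    theta X k ≤ (Fintype.card V : ℝ) * (1 - (degMin X k : ℝ) / lambdaMax (Lup X k)) := by
  have hub : ∀ t ∈ {t | ∃ Y, thetaFeasible X k Y ∧ Matrix.trace (Lc V k * Y) = t},
      t ≤ (Fintype.card V : ℝ) * (1 - (degMin X k : ℝ) / lambdaMax (Lup X k)) := by
    rintro t ⟨Y, hY, rfl⟩
    exact key_bound X k hk hkn hskel hne Y hY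
  have hbdd : BddAbove {t | ∃ Y, thetaFeasible X k Y ∧ Matrix.trace (Lc V k * Y) = t} :=
    ⟨_, hub⟩
  set A := {m | ∃ S : Finset V, X.IsIndep k S ∧ S.card = m} with hA
  have hA_bdd : BddAbove A := by
    refine ⟨Fintype.card V, ?_⟩
    rintro m ⟨S, -, rfl⟩
    exact le_of_le_of_eq (Finset.card_le_univ S) Finset.card_univ
  obtain ⟨S0, -, hS0card⟩ := Finset.exists_subset_card_eq
    (show k ≤ (Finset.univ : Finset V).card by simpa using hkn)
  have hS0ind : X.IsIndep k S0 := by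
    intro H hH hsub
    have h1 : H.card = k + 1 := (Finset.mem_filter.1 hH).2
    have h2 := Finset.card_le_card hsub
    omega
  have hkA : k ∈ A := ⟨S0, hS0ind, hS0card⟩
  have hAne : A.Nonempty := ⟨k, hkA⟩
  have halpha_mem : alphaNum X k ∈ A := Nat.sSup_mem hAne hA_bdd
  obtain ⟨S, hSind, hScard⟩ := halpha_mem
  have hk_le : k ≤ alphaNum X k := le_csSup hA_bdd hkA
  have hks : k ≤ S.card := by omega
  obtain ⟨Y, hYfeas, hYval⟩ := construction X k hk S hSind hks
  have hmem : (S.card : ℝ) ∈ {t | ∃ Y, thetaFeasible X k Y ∧ Matrix.trace (Lc V k * Y) = t} :=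
    ⟨Y, hYfeas, hYval⟩
  constructor
  · rw [theta]
    have h := le_csSup hbdd hmem
    rwa [hScard] at h
  · rw [theta]
    refine Real.sSup_le hub ?_
    have h1 := hub _ hmem
    have h2 : (0:ℝ) ≤ (S.card : ℝ) := Nat.cast_nonneg _
    linarith
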